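/- Let Y = Xβ + ε with β supported on S, and let β̂ be any Lasso solution β̂ = argmin_b ½‖Y − Xb‖²_n + λ‖b‖₁ with λ ≥ 2·max_j |(X^{(j)})'ε|/n. Then ½‖X(β̂ − β)‖²_n + (λ − max_j |(X^{(j)})'ε|/n)·‖β̂_{S^c}‖₁ ≤ (λ + max_j |(X^{(j)})'ε|/n)·‖β̂_S − β_S‖₁. -/

import Mathlib

open Finset

/-- basic inequality for the Lasso. -/
theorem stmt4 (n p : ℕ) (hn : 0 < n) (hp : 0 < p)
    (X : Matrix (Fin n) (Fin p) ℝ) (β βhat : Fin p → ℝ) (ε Y : Fin n → ℝ)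
    (S : Finset (Fin p)) (hsupp : ∀ j ∉ S, β j = 0)
    (hY : Y = fun i => X.mulVec β i + ε i)
    (lam : ℝ) (hlam : 2 * (⨆ j : Fin p, |∑ i, X i j * ε i| / n) ≤ lam)
    (hmin : ∀ b : Fin p → ℝ,
      (∑ i, (Y i - X.mulVec βhat i) ^ 2) / (2 * n) + lam * ∑ j, |βhat j| ≤
      (∑ i, (Y i - X.mulVec b i) ^ 2) / (2 * n) + lam * ∑ j, |b j|) :
    (∑ i, (X.mulVec (βhat - β)) i ^ 2) / (2 * n) +
      (lam - ⨆ j : Fin p, |∑ i, X i j * ε i| / n) * ∑ j ∈ Sᶜ, |βhat j| ≤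
    (lam + ⨆ j : Fin p, |∑ i, X i j * ε i| / n) * ∑ j ∈ S, |βhat j - β j| := by
  have hn' : (0:ℝ) < n := by exact_mod_cast hn
  set M := ⨆ j : Fin p, |∑ i, X i j * ε i| / n with hMdef
  have hMle : ∀ j, |∑ i, X i j * ε i| ≤ n * M := by
    intro j
    have h1 : |∑ i, X i j * ε i| / n ≤ M :=
      le_ciSup (f := fun j : Fin p => |∑ i, X i j * ε i| / (n:ℝ))
        (Set.Finite.bddAbove (Set.finite_range _)) j
    calc |∑ i, X i j * ε i| = n * (|∑ i, X i j * ε i| / n) := by field_simp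
      _ ≤ n * M := by nlinarith
  have hM0 : 0 ≤ M := by
    have j0 : Fin p := ⟨0, hp⟩
    have := hMle j0
    have h2 : 0 ≤ |∑ i, X i j0 * ε i| := abs_nonneg _
    nlinarith
  have hlam0 : 0 ≤ lam := by nlinarith
  set d := X.mulVec (βhat - β) with hd
  have hdvec : ∀ i, X.mulVec βhat i = X.mulVec β i + d i := by
    intro i
    simp [hd, Matrix.mulVec_sub]
  have hkey := hmin β
  simp only [hY] at hkey
  have e1 : ∀ i, (X.mulVec β i + ε i - X.mulVec βhat i) = ε i - d i := by
    intro i; rw [hdvec i]; ring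
  have e2 : ∀ i, (X.mulVec β i + ε i - X.mulVec β i) = ε i := by
    intro i; ring
  simp only [e1, e2] at hkey
  have hexp : ∑ i, (ε i - d i)^2
      = (∑ i, ε i^2) - 2*(∑ i, ε i * d i) + (∑ i, d i ^2) := by
    rw [Finset.mul_sum, ← Finset.sum_sub_distrib, ← Finset.sum_add_distrib]
    exact Finset.sum_congr rfl fun i _ => by ring
  rw [hexp] at hkey
  -- swap the double sum
  have hswap : ∑ i, ε i * d i = ∑ j, (βhat j - β j) * ∑ i, X i j * ε i := by
    simp only [hd, Matrix.mulVec, dotProduct, Pi.sub_apply, Finset.mul_sum]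
    rw [Finset.sum_comm]
    exact Finset.sum_congr rfl fun j _ => Finset.sum_congr rfl fun i _ => by ring
  have hbound : ∑ i, ε i * d i ≤ (n * M) * ∑ j, |βhat j - β j| := by
    rw [hswap, Finset.mul_sum]
    refine Finset.sum_le_sum fun j _ => ?_
    calc (βhat j - β j) * ∑ i, X i j * ε i ≤ |(βhat j - β j) * ∑ i, X i j * ε i| :=
          le_abs_self _
      _ = |βhat j - β j| * |∑ i, X i j * ε i| := abs_mul _ _
      _ ≤ |βhat j - β j| * (n * M) :=
          mul_le_mul_of_nonneg_left (hMle j) (abs_nonneg _)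
      _ = n * M * |βhat j - β j| := by ring
  -- splittings
  have hsplit1 : ∑ j, |βhat j - β j|
      = ∑ j ∈ S, |βhat j - β j| + ∑ j ∈ Sᶜ, |βhat j| := by
    rw [← Finset.sum_add_sum_compl S]
    congr 1
    refine Finset.sum_congr rfl fun j hj => ?_
    rw [hsupp j (Finset.mem_compl.mp hj), sub_zero]
  have hsplit2 : ∑ j, |β j| = ∑ j ∈ S, |β j| := by
    rw [← Finset.sum_add_sum_compl S]
    have : ∑ j ∈ Sᶜ, |β j| = 0 := by
      refine Finset.sum_eq_zero fun j hj => ?_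
      rw [hsupp j (Finset.mem_compl.mp hj), abs_zero]
    rw [this, add_zero]
  have hsplit3 : ∑ j, |βhat j| = ∑ j ∈ S, |βhat j| + ∑ j ∈ Sᶜ, |βhat j| :=
    (Finset.sum_add_sum_compl S _).symm
  have htri : ∑ j ∈ S, |β j| - ∑ j ∈ S, |βhat j| ≤ ∑ j ∈ S, |βhat j - β j| := by
    rw [← Finset.sum_sub_distrib]
    refine Finset.sum_le_sum fun j _ => ?_
    have := abs_sub_abs_le_abs_sub (β j) (βhat j)
    have h2 : |β j - βhat j| = |βhat j - β j| := abs_sub_comm _ _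
    linarith
  rw [hsplit3, hsplit2] at hkey
  rw [hsplit1] at hbound
  set Q := ∑ i, d i ^ 2
  set B := ∑ j ∈ S, |βhat j - β j|
  set A := ∑ j ∈ Sᶜ, |βhat j|
  set E := ∑ i, ε i * d i
  set Sh := ∑ j ∈ S, |βhat j|
  -- from hkey : (∑ε² - 2E + Q)/(2n) + lam*(Sh+A) ≤ ∑ε²/(2n) + lam*SB
  have hdiv : Q / (2*n) + lam*(Sh+A) ≤ E/n + lam * ∑ j ∈ S, |β j| := by
    have h2n : (0:ℝ) < 2*n := by linarith
    have := hkey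
    have heq : ((∑ i, ε i^2) - 2*E + Q)/(2*n)
        = (∑ i, ε i^2)/(2*n) - E/n + Q/(2*n) := by
      field_simp
    rw [heq] at this
    linarith
  have hEn : E/n ≤ M * (B + A) := by
    have : E ≤ n * M * (B + A) := hbound
    rw [div_le_iff₀ hn']
    nlinarith
  have hfin : lam * (∑ j ∈ S, |β j| - Sh) ≤ lam * B :=
    mul_le_mul_of_nonneg_left (by linarith) hlam0
  nlinarith
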